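/- If the principle ⋔(𝔰, 𝔰, 𝔭) holds, then 𝔰 = 𝔰(pr). -/

import Mathlib

open Filter Set Cardinal

/-- The splitting number `𝔰`. -/
noncomputable def frakS : Cardinal :=
  sInf { κc : Cardinal | ∃ S : Set (Set ℕ), #S = κc ∧
    ∀ a : Set ℕ, a.Infinite → ∃ x ∈ S, (a ∩ x).Infinite ∧ (a \ x).Infinite }

/-- The pseudo-intersection number `𝔭`: the least size of a family of infinite subsets
of `ℕ` with the strong finite intersection property but no infinite pseudo-intersection. -/
noncomputable def frakP : Cardinal :=
  sInf { κc : Cardinal | ∃ F : Set (Set ℕ), #F = κc ∧ (∀ a ∈ F, a.Infinite) ∧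
    (∀ G : Finset (Set ℕ), ↑G ⊆ F → (⋂ a ∈ G, a).Infinite) ∧
    ¬ ∃ s : Set ℕ, s.Infinite ∧ ∀ a ∈ F, (s \ a).Finite }

/-- `P : ℕ → Set ℕ` is a partition of `ℕ` into pairwise disjoint pieces. -/
def PartitionOfNat (P : ℕ → Set ℕ) : Prop :=
  (∀ i j : ℕ, i ≠ j → Disjoint (P i) (P j)) ∧ (⋃ i, P i) = Set.univ

/-- A partition splits `a` if every piece meets `a` in an infinite set. -/
def PartSplits (P : ℕ → Set ℕ) (a : Set ℕ) : Prop := ∀ i : ℕ, (P i ∩ a).Infinite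

/-- `𝔰(pr)`: the least size of a splitting family of partitions of `ℕ`. -/
noncomputable def sPR : Cardinal :=
  sInf { κc : Cardinal | ∃ F : Set (ℕ → Set ℕ), #F = κc ∧ (∀ P ∈ F, PartitionOfNat P) ∧
    ∀ a : Set ℕ, a.Infinite → ∃ P ∈ F, PartSplits P a }

/-- The stick principle `⋔(κ, λ, θ)`: there is a family of `λ` many countably infinite
subsets of `κ` such that every subset of `κ` of size `θ` contains a member of the family. -/
def StickPrinciple (κ lam θ : Cardinal) : Prop :=
  ∃ C : Set (Set κ.out), #C = lam ∧ (∀ A ∈ C, #A = Cardinal.aleph0) ∧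
    ∀ X : Set κ.out, #X = θ → ∃ A ∈ C, A ⊆ X

namespace Stmt9Aux
noncomputable section
open scoped Classical

lemma pseudo {F : Set (Set ℕ)} (h1 : ∀ a ∈ F, a.Infinite)
    (h2 : ∀ G : Finset (Set ℕ), ↑G ⊆ F → (⋂ a ∈ G, a).Infinite) (hlt : #F < frakP) :
    ∃ s : Set ℕ, s.Infinite ∧ ∀ a ∈ F, (s \ a).Finite := by
  by_contra hno
  have hm : #F ∈ { κc : Cardinal | ∃ F : Set (Set ℕ), #F = κc ∧ (∀ a ∈ F, a.Infinite) ∧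
      (∀ G : Finset (Set ℕ), ↑G ⊆ F → (⋂ a ∈ G, a).Infinite) ∧
      ¬ ∃ s : Set ℕ, s.Infinite ∧ ∀ a ∈ F, (s \ a).Finite } := ⟨F, rfl, h1, h2, hno⟩
  exact absurd (csInf_le' hm) (not_le.mpr hlt)

def tyin {o : Ordinal.{0}} (x : o.ToType) : Ordinal :=
  @Ordinal.typein o.ToType (· < ·) isWellOrder_lt x

lemma tyin_lt_self {o : Ordinal.{0}} (x : o.ToType) : tyin x < o := Ordinal.typein_lt_self x

def enumo (o : Ordinal.{0}) (γ : Ordinal) (h : γ < o) : o.ToType :=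
  @Ordinal.enum o.ToType (· < ·) isWellOrder_lt ⟨γ, by rwa [Ordinal.type_toType]⟩

lemma tyin_enumo (o : Ordinal.{0}) (γ : Ordinal) (h : γ < o) : tyin (enumo o γ h) = γ :=
  @Ordinal.typein_enum o.ToType (· < ·) isWellOrder_lt γ (by rwa [Ordinal.type_toType])

abbrev K : Type := frakS.out

def Sp (x a : Set ℕ) : Prop := (a ∩ x).Infinite ∧ (a \ x).Infinite

def rK : K → K → Prop := WellOrderingRel

instance : IsWellOrder K rK := WellOrderingRel.isWellOrder

def wfK : WellFounded rK := IsWellFounded.wf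

variable (g : K → Set ℕ)

def sel [Nonempty K] (b : Set ℕ) : K :=
  if h : ∃ α : K, Sp (g α) b then wfK.min {α | Sp (g α) b} h else Classical.arbitrary K

lemma sel_spec [Nonempty K] {b : Set ℕ} (h : ∃ α : K, Sp (g α) b) : Sp (g (sel g b)) b := by
  rw [sel, dif_pos h]; exact wfK.min_mem _ h

lemma sel_min [Nonempty K] {b : Set ℕ} (h : ∃ α : K, Sp (g α) b) {α : K}
    (hα : rK α (sel g b)) : ¬ Sp (g α) b := by
  rw [sel, dif_pos h] at hα
  exact fun hs => wfK.not_lt_min _ hs hα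

def tw [Nonempty K] (a : Set ℕ) : Ordinal.{0} → Set ℕ := fun o =>
  Ordinal.limitRecOn o a (fun _ prev => prev ∩ g (sel g prev))
    (fun o _ prev =>
      if h : ∃ s : Set ℕ, s.Infinite ∧ ∀ (o') (h' : o' < o), (s \ prev o' h').Finite then h.choose
      else Set.univ)

lemma tw_zero [Nonempty K] (a : Set ℕ) : tw g a 0 = a := Ordinal.limitRecOn_zero ..

lemma tw_succ [Nonempty K] (a : Set ℕ) (o : Ordinal) :
    tw g a (Order.succ o) = tw g a o ∩ g (sel g (tw g a o)) := Ordinal.limitRecOn_succ ..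

lemma tw_limit [Nonempty K] (a : Set ℕ) {o : Ordinal} (ho : Order.IsSuccLimit o) :
    tw g a o = if h : ∃ s : Set ℕ, s.Infinite ∧ ∀ (o') (_ : o' < o), (s \ tw g a o').Finite
      then h.choose else Set.univ := Ordinal.limitRecOn_limit _ _ _ _ ho

/-- The invariant of the tower construction. -/
def Inv [Nonempty K] (a : Set ℕ) (o : Ordinal) : Prop :=
  (tw g a o).Infinite ∧
    ∀ γ < o, ((tw g a o) \ tw g a γ).Finite ∧ ((tw g a o) \ g (sel g (tw g a γ))).Finite

lemma tw_inv [Nonempty K] (hg : ∀ b : Set ℕ, b.Infinite → ∃ α : K, Sp (g α) b)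
    {a : Set ℕ} (ha : a.Infinite) : ∀ o < frakP.ord, Inv g a o := by
  intro o
  induction o using Ordinal.induction with
  | _ o IH =>
  intro ho
  rcases Ordinal.zero_or_succ_or_isSuccLimit o with rfl | ⟨γ0, rfl⟩ | hlim
  · exact ⟨by rwa [tw_zero], fun γ hγ => absurd hγ (not_lt_of_ge (zero_le : (0:Ordinal) ≤ γ))⟩
  · -- successor case
    have hγ0 : γ0 < frakP.ord := lt_trans (Order.lt_succ γ0) ho
    have IHγ := IH γ0 (Order.lt_succ γ0) hγ0
    have hex : ∃ α : K, Sp (g α) (tw g a γ0) := hg _ IHγ.1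
    have hsp := sel_spec g hex
    constructor
    · rw [tw_succ]; exact hsp.1
    · intro γ hγ
      rw [Order.lt_succ_iff] at hγ
      rcases hγ.lt_or_eq with hγ' | rfl
      · have h1 := (IHγ.2 γ hγ').1
        have h2 := (IHγ.2 γ hγ').2
        rw [tw_succ]
        exact ⟨h1.subset (diff_subset_diff_left inter_subset_left),
          h2.subset (diff_subset_diff_left inter_subset_left)⟩
      · rw [tw_succ]
        constructor
        · exact (Set.finite_empty.subset (by intro x hx; exact hx.2 hx.1.1))
        · exact (Set.finite_empty.subset (by intro x hx; exact hx.2 hx.1.2))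
  · -- limit case
    have hFam : ∀ o' < o, Inv g a o' := fun o' h' => IH o' h' (h'.trans ho)
    set Fam : Set (Set ℕ) :=
      Set.range (fun x : o.ToType => tw g a (tyin x))
    have hmem : ∀ γ < o, tw g a γ ∈ Fam := by
      intro γ hγ
      exact ⟨enumo o γ hγ, by show tw g a (tyin (enumo o γ hγ)) = _; rw [tyin_enumo]⟩
    have hsz : #Fam < frakP := by
      calc #Fam ≤ #(o.ToType) := Cardinal.mk_range_le
      _ = o.card := Cardinal.mk_toType o
      _ < frakP := Cardinal.lt_ord.mp ho
    have h1 : ∀ b ∈ Fam, b.Infinite := by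
      rintro b ⟨x, rfl⟩
      exact (hFam _ (tyin_lt_self x)).1
    have key : ∀ γ δ : Ordinal, γ ≤ δ → δ < o → (tw g a δ \ tw g a γ).Finite := by
      intro γ δ hgd hδ
      rcases hgd.lt_or_eq with h | rfl
      · exact ((hFam δ hδ).2 γ h).1
      · simp
    have claim : ∀ G : Finset (Set ℕ), ↑G ⊆ Fam →
        ∃ δ, δ < o ∧ ((tw g a δ) \ ⋂ b ∈ G, b).Finite := by
      intro G
      induction G using Finset.induction_on with
      | empty => intro _; exact ⟨0, hlim.pos, by simp⟩
      | insert _ _ hni =>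
        rename_i b G ih
        intro hins
        have hbFam : b ∈ Fam := hins (Finset.mem_insert_self b G)
        obtain ⟨x, hx⟩ := hbFam
        obtain ⟨δ1, hδ1, hfin1⟩ := ih (fun y hy => hins (Finset.mem_insert_of_mem hy))
        set γb := tyin x with hγb
        refine ⟨max δ1 γb, max_lt hδ1 (tyin_lt_self x), ?_⟩
        rw [Finset.set_biInter_insert]
        have hfb : (tw g a (max δ1 γb) \ b).Finite := by
          rw [← hx]
          exact key _ _ (le_max_right _ _) (max_lt hδ1 (tyin_lt_self x))
        have hfG : (tw g a (max δ1 γb) \ ⋂ c ∈ G, c).Finite := by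
          have := key δ1 (max δ1 γb) (le_max_left _ _) (max_lt hδ1 (tyin_lt_self x))
          exact (this.union hfin1).subset (by
            intro y hy
            by_cases hyy : y ∈ tw g a δ1
            · exact Or.inr ⟨hyy, hy.2⟩
            · exact Or.inl ⟨hy.1, hyy⟩)
        exact (hfb.union hfG).subset (by
          intro y hy
          by_cases hyb : y ∈ b
          · exact Or.inr ⟨hy.1, fun h => hy.2 ⟨hyb, h⟩⟩
          · exact Or.inl ⟨hy.1, hyb⟩)
    have h2 : ∀ G : Finset (Set ℕ), ↑G ⊆ Fam → (⋂ a ∈ G, a).Infinite := by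
      intro G hG
      obtain ⟨δ, hδ, hfin⟩ := claim G hG
      have := ((hFam δ hδ).1.diff hfin)
      rw [Set.diff_diff_right_self] at this
      exact this.mono inter_subset_right
    obtain ⟨s, hs1, hs2⟩ := pseudo h1 h2 hsz
    have hdite : ∃ s : Set ℕ, s.Infinite ∧ ∀ (o') (_ : o' < o), (s \ tw g a o').Finite :=
      ⟨s, hs1, fun o' h' => hs2 _ (hmem o' h')⟩
    have heq := tw_limit g a hlim
    rw [dif_pos hdite] at heq
    have hspec := hdite.choose_spec
    rw [← heq] at hspec
    refine ⟨hspec.1, fun γ hγ => ⟨hspec.2 γ hγ, ?_⟩⟩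
    have hsucc : Order.succ γ < o := hlim.succ_lt hγ
    have h3 := hspec.2 _ hsucc
    rw [tw_succ] at h3
    exact h3.subset (by intro x hx; exact ⟨hx.1, fun hc => hx.2 hc.2⟩)

lemma sel_lt [Nonempty K] (hg : ∀ b : Set ℕ, b.Infinite → ∃ α : K, Sp (g α) b)
    {a : Set ℕ} (ha : a.Infinite) {γ δ : Ordinal} (hγδ : γ < δ) (hδ : δ < frakP.ord) :
    rK (sel g (tw g a γ)) (sel g (tw g a δ)) := by
  have hγ : γ < frakP.ord := hγδ.trans hδ
  have Iγ := tw_inv g hg ha γ hγ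
  have Iδ := tw_inv g hg ha δ hδ
  have hexγ : ∃ α : K, Sp (g α) (tw g a γ) := hg _ Iγ.1
  have hexδ : ∃ α : K, Sp (g α) (tw g a δ) := hg _ Iδ.1
  have hspδ := sel_spec g hexδ
  have hd1 := (Iδ.2 γ hγδ).1
  have hd2 := (Iδ.2 γ hγδ).2
  have h1 : ¬ Sp (g (sel g (tw g a γ))) (tw g a δ) := fun hs => hs.2 hd2
  have h2 : ∀ α : K, rK α (sel g (tw g a γ)) → ¬ Sp (g α) (tw g a δ) := by
    intro α hα hs
    refine sel_min g hexγ hα ⟨?_, ?_⟩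
    · refine (hs.1.diff hd1).mono ?_
      intro x hx
      rcases Classical.em (x ∈ tw g a γ) with h | h
      · exact ⟨h, hx.1.2⟩
      · exact absurd ⟨hx.1.1, h⟩ hx.2
    · refine (hs.2.diff hd1).mono ?_
      intro x hx
      rcases Classical.em (x ∈ tw g a γ) with h | h
      · exact ⟨h, hx.1.2⟩
      · exact absurd ⟨hx.1.1, h⟩ hx.2
  rcases trichotomous_of rK (sel g (tw g a γ)) (sel g (tw g a δ)) with h | h | h
  · exact h
  · exact absurd (h ▸ hspδ) h1
  · exact absurd hspδ (h2 _ h)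

/-! ### Enumerating the first `ω` elements of an infinite subset of `K` -/

def pick [Nonempty K] (A s : Set K) : K :=
  if h : (A \ s).Nonempty then wfK.min (A \ s) h else Classical.arbitrary K

def stepSet [Nonempty K] (A : Set K) : ℕ → Set K
  | 0 => ∅
  | n + 1 => insert (pick A (stepSet A n)) (stepSet A n)

def en [Nonempty K] (A : Set K) (n : ℕ) : K := pick A (stepSet A n)

lemma stepSet_finite [Nonempty K] (A : Set K) (n : ℕ) : (stepSet A n).Finite := by
  induction n with
  | zero => simp [stepSet]
  | succ n ih => exact Set.Finite.insert _ ih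

lemma en_mem [Nonempty K] {A : Set K} (hA : A.Infinite) (n : ℕ) :
    en A n ∈ A \ stepSet A n := by
  have h : (A \ stepSet A n).Nonempty := (hA.diff (stepSet_finite A n)).nonempty
  rw [en, pick, dif_pos h]
  exact wfK.min_mem _ h

lemma stepSet_mono [Nonempty K] (A : Set K) {m n : ℕ} (h : m ≤ n) :
    stepSet A m ⊆ stepSet A n := by
  induction n, h using Nat.le_induction with
  | base => exact subset_rfl
  | succ n _ ih => exact ih.trans (Set.subset_insert _ _)

lemma pick_min [Nonempty K] {A s : Set K} (h : (A \ s).Nonempty) {x : K}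
    (hx : x ∈ A \ s) : ¬ rK x (pick A s) := by
  rw [pick, dif_pos h]
  exact wfK.not_lt_min _ hx

lemma en_mem_stepSet [Nonempty K] (A : Set K) {m n : ℕ} (h : m < n) :
    en A m ∈ stepSet A n := by
  have : en A m ∈ stepSet A (m + 1) := Set.mem_insert _ _
  exact stepSet_mono A h this

lemma en_rlt [Nonempty K] {A : Set K} (hA : A.Infinite) {m n : ℕ} (h : m < n) :
    rK (en A m) (en A n) ∧ en A m ≠ en A n := by
  have hn := en_mem hA n
  have hm := en_mem hA m
  have hne : en A m ≠ en A n := by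
    intro he
    exact hn.2 (he ▸ en_mem_stepSet A h)
  have hnlt : ¬ rK (en A n) (en A m) := by
    have hs : en A n ∈ A \ stepSet A m := ⟨hn.1, fun hc => hn.2 (stepSet_mono A h.le hc)⟩
    exact pick_min ⟨_, hs⟩ hs
  rcases trichotomous_of rK (en A m) (en A n) with h' | h' | h'
  · exact ⟨h', hne⟩
  · exact absurd h' hne
  · exact absurd h' hnlt
/-! ### The partition associated to a countable subset of `K` -/

def piece [Nonempty K] (A : Set K) (i : ℕ) : Set ℕ :=
  (⋂ m ∈ Finset.range (i + 1), g (en A m)) \ g (en A (i + 1))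

def partOf [Nonempty K] (A : Set K) : ℕ → Set ℕ := fun i =>
  if i = 0 then (⋃ j, ⋃ (_ : 1 ≤ j), piece g A j)ᶜ else piece g A i

lemma piece_subset [Nonempty K] (A : Set K) {i j : ℕ} (hij : i < j) :
    piece g A j ⊆ g (en A (i + 1)) := by
  intro x hx
  have h1 := hx.1
  rw [Set.mem_iInter₂] at h1
  exact h1 (i + 1) (Finset.mem_range.mpr (by omega))

lemma piece_disj [Nonempty K] (A : Set K) {i j : ℕ} (hij : i < j) {x : ℕ}
    (hxi : x ∈ piece g A i) (hxj : x ∈ piece g A j) : False :=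
  hxi.2 (piece_subset g A hij hxj)

lemma partOf_partition [Nonempty K] (A : Set K) : PartitionOfNat (partOf g A) := by
  constructor
  · intro i j hij
    rw [Set.disjoint_left]
    intro x hxi hxj
    rcases Nat.eq_zero_or_pos i with rfl | hi
    · rcases Nat.eq_zero_or_pos j with rfl | hj
      · exact hij rfl
      · rw [partOf, if_pos rfl] at hxi
        rw [partOf, if_neg (by omega)] at hxj
        exact hxi (Set.mem_iUnion.mpr ⟨j, Set.mem_iUnion.mpr ⟨hj, hxj⟩⟩)
    · rw [partOf, if_neg (by omega)] at hxi
      rcases Nat.eq_zero_or_pos j with rfl | hj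
      · rw [partOf, if_pos rfl] at hxj
        exact hxj (Set.mem_iUnion.mpr ⟨i, Set.mem_iUnion.mpr ⟨hi, hxi⟩⟩)
      · rw [partOf, if_neg (by omega)] at hxj
        rcases Nat.lt_or_ge i j with h | h
        · exact piece_disj g A h hxi hxj
        · exact piece_disj g A (by omega) hxj hxi
  · rw [Set.eq_univ_iff_forall]
    intro x
    rw [Set.mem_iUnion]
    by_cases hx : x ∈ ⋃ j, ⋃ (_ : 1 ≤ j), piece g A j
    · rw [Set.mem_iUnion] at hx
      obtain ⟨j, hj⟩ := hx
      rw [Set.mem_iUnion] at hj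
      obtain ⟨hj1, hj2⟩ := hj
      exact ⟨j, by rw [partOf, if_neg (by omega)]; exact hj2⟩
    · exact ⟨0, by rw [partOf, if_pos rfl]; exact hx⟩

lemma partOf_splits [Nonempty K] (hg : ∀ b : Set ℕ, b.Infinite → ∃ α : K, Sp (g α) b)
    {a : Set ℕ} (ha : a.Infinite) {A : Set K} (hA : A.Infinite)
    (hsub : ∀ α ∈ A, ∃ o, o < frakP.ord ∧ α = sel g (tw g a o)) :
    PartSplits (partOf g A) a := by
  have hoo : ∀ n : ℕ, ∃ o, o < frakP.ord ∧ en A n = sel g (tw g a o) :=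
    fun n => hsub _ (en_mem hA n).1
  choose O hO1 hO2 using hoo
  have hmono : ∀ m n : ℕ, m < n → O m < O n := by
    intro m n hmn
    rcases lt_trichotomy (O m) (O n) with h | h | h
    · exact h
    · exact absurd (by rw [hO2 m, hO2 n, h]) (en_rlt hA hmn).2
    · exfalso
      have h1 := sel_lt g hg ha h (hO1 m)
      rw [← hO2 m, ← hO2 n] at h1
      exact (irrefl_of rK _) (trans_of rK (en_rlt hA hmn).1 h1)
  have hbase : ∀ n : ℕ, 0 < n → (tw g a (O n) \ a).Finite := by
    intro n hn
    have h0 : (0 : Ordinal) < O n := lt_of_le_of_lt ((zero_le : (0:Ordinal) ≤ O 0)) (hmono 0 n hn)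
    have := (tw_inv g hg ha _ (hO1 n)).2 0 h0
    rw [tw_zero] at this
    exact this.1
  have hup : ∀ m n : ℕ, m < n → (tw g a (O n) \ g (en A m)).Finite := by
    intro m n hmn
    have := (tw_inv g hg ha _ (hO1 n)).2 (O m) (hmono m n hmn)
    rw [← hO2 m] at this
    exact this.2
  have hsplit : ∀ n : ℕ, (tw g a (O n) \ g (en A n)).Infinite := by
    intro n
    have hinf := (tw_inv g hg ha _ (hO1 n)).1
    have := (sel_spec g (hg _ hinf)).2
    rw [← hO2 n] at this
    exact this
  intro i
  rcases Nat.eq_zero_or_pos i with rfl | hi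
  · -- the 0-th piece
    have hcore : ((tw g a (O 1) \ g (en A 1)) \
        ((tw g a (O 1) \ g (en A 0)) ∪ (tw g a (O 1) \ a))).Infinite :=
      (hsplit 1).diff ((hup 0 1 Nat.zero_lt_one).union (hbase 1 Nat.zero_lt_one))
    refine hcore.mono ?_
    rintro x ⟨⟨hxb, hxg1⟩, hxbad⟩
    have hxg0 : x ∈ g (en A 0) := by
      by_contra hc
      exact hxbad (Or.inl ⟨hxb, hc⟩)
    have hxa : x ∈ a := by
      by_contra hc
      exact hxbad (Or.inr ⟨hxb, hc⟩)
    refine ⟨?_, hxa⟩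
    rw [partOf, if_pos rfl]
    intro hun
    rw [Set.mem_iUnion] at hun
    obtain ⟨j, hj⟩ := hun
    rw [Set.mem_iUnion] at hj
    obtain ⟨hj1, hj2⟩ := hj
    exact hxg1 (piece_subset g A (show 0 < j by omega) hj2)
  · -- the `i`-th piece, `i ≥ 1`
    have hfin : ((tw g a (O (i + 1)) \ a) ∪
        ⋃ m ∈ Finset.range (i + 1), (tw g a (O (i + 1)) \ g (en A m))).Finite := by
      refine (hbase (i + 1) (by omega)).union ?_
      refine Set.Finite.biUnion (Finset.range (i + 1)).finite_toSet ?_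
      intro m hm
      exact hup m (i + 1) (by rw [Finset.mem_coe, Finset.mem_range] at hm; omega)
    have hcore := (hsplit (i + 1)).diff hfin
    refine hcore.mono ?_
    rintro x ⟨⟨hxb, hxg⟩, hxbad⟩
    have hxa : x ∈ a := by
      by_contra hc
      exact hxbad (Or.inl ⟨hxb, hc⟩)
    have hxm : ∀ m ∈ Finset.range (i + 1), x ∈ g (en A m) := by
      intro m hm
      by_contra hc
      exact hxbad (Or.inr (Set.mem_biUnion hm ⟨hxb, hc⟩))
    refine ⟨?_, hxa⟩
    rw [partOf, if_neg (by omega)]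
    exact ⟨Set.mem_iInter₂.mpr hxm, hxg⟩
lemma exists_split {a : Set ℕ} (ha : a.Infinite) :
    ∃ x : Set ℕ, (a ∩ x).Infinite ∧ (a \ x).Infinite := by
  let f := ha.natEmbedding
  have hinj : Function.Injective (fun n : ℕ => ((f (2 * n) : a) : ℕ)) := by
    intro m n hmn
    simp only at hmn
    have := f.injective (Subtype.coe_injective hmn)
    omega
  have hinj2 : Function.Injective (fun n : ℕ => ((f (2 * n + 1) : a) : ℕ)) := by
    intro m n hmn
    simp only at hmn
    have := f.injective (Subtype.coe_injective hmn)
    omega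
  refine ⟨Set.range (fun n : ℕ => ((f (2 * n) : a) : ℕ)), ?_, ?_⟩
  · refine (Set.infinite_range_of_injective hinj).mono ?_
    rintro x ⟨n, rfl⟩
    exact ⟨(f (2 * n)).2, ⟨n, rfl⟩⟩
  · refine (Set.infinite_range_of_injective hinj2).mono ?_
    rintro x ⟨n, rfl⟩
    refine ⟨(f (2 * n + 1)).2, ?_⟩
    rintro ⟨m, hm⟩
    simp only at hm
    have := f.injective (Subtype.coe_injective hm)
    omega

lemma tyin_inj {o : Ordinal.{0}} : Function.Injective (tyin (o := o)) :=
  fun _ _ h => (@Ordinal.typein o.ToType (· < ·) isWellOrder_lt).injective h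
end
end Stmt9Aux

/-- If `⋔(𝔰, 𝔰, 𝔭)` holds, then `𝔰 = 𝔰(pr)`. -/


theorem stmt9 (h : StickPrinciple frakS frakS frakP) : frakS = sPR := by
  classical
  have hSne : { κc : Cardinal | ∃ S : Set (Set ℕ), #S = κc ∧
      ∀ a : Set ℕ, a.Infinite → ∃ x ∈ S, (a ∩ x).Infinite ∧ (a \ x).Infinite }.Nonempty := by
    refine ⟨#(Set.univ : Set (Set ℕ)), Set.univ, rfl, ?_⟩
    intro a ha
    obtain ⟨x, h1, h2⟩ := Stmt9Aux.exists_split ha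
    exact ⟨x, Set.mem_univ x, h1, h2⟩
  have hSmem : frakS ∈ { κc : Cardinal | ∃ S : Set (Set ℕ), #S = κc ∧
      ∀ a : Set ℕ, a.Infinite → ∃ x ∈ S, (a ∩ x).Infinite ∧ (a \ x).Infinite } :=
    csInf_mem hSne
  obtain ⟨S, hScard, hSsplit⟩ := hSmem
  have hS0 : frakS ≠ 0 := by
    intro h0
    have : #↥S = 0 := hScard.trans h0
    rw [Cardinal.mk_eq_zero_iff] at this
    obtain ⟨x, hx, -⟩ := hSsplit Set.univ Set.infinite_univ
    exact this.false ⟨x, hx⟩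
  haveI hKne : Nonempty Stmt9Aux.K :=
    Cardinal.mk_ne_zero_iff.mp (by rw [Cardinal.mk_out]; exact hS0)
  have hKS : #Stmt9Aux.K = #↥S := by rw [Cardinal.mk_out, hScard]
  obtain ⟨e⟩ := Cardinal.eq.mp hKS
  set g : Stmt9Aux.K → Set ℕ := fun α => (e α : Set ℕ) with hg_def
  have hg : ∀ b : Set ℕ, b.Infinite → ∃ α, Stmt9Aux.Sp (g α) b := by
    intro b hb
    obtain ⟨x, hxS, hx1, hx2⟩ := hSsplit b hb
    refine ⟨e.symm ⟨x, hxS⟩, ?_⟩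
    have hgx : g (e.symm ⟨x, hxS⟩) = x := by rw [hg_def]; simp
    rw [hgx]
    exact ⟨hx1, hx2⟩
  obtain ⟨C, hC1, hC2, hC3⟩ := h
  set FP : Set (ℕ → Set ℕ) := (fun A => Stmt9Aux.partOf g A) '' C with hFP
  have hFPmem : #FP ∈ { κc : Cardinal | ∃ F : Set (ℕ → Set ℕ), #F = κc ∧
      (∀ P ∈ F, PartitionOfNat P) ∧ ∀ a : Set ℕ, a.Infinite → ∃ P ∈ F, PartSplits P a } := by
    refine ⟨FP, rfl, ?_, ?_⟩
    · rintro P ⟨A, hA, rfl⟩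
      exact Stmt9Aux.partOf_partition g A
    · intro a ha
      set F : (frakP.ord).ToType → Stmt9Aux.K :=
        fun x => Stmt9Aux.sel g (Stmt9Aux.tw g a (Stmt9Aux.tyin x)) with hFdef
      have hFmono : ∀ x y : (frakP.ord).ToType,
          Stmt9Aux.tyin x < Stmt9Aux.tyin y → Stmt9Aux.rK (F x) (F y) :=
        fun x y hxy => Stmt9Aux.sel_lt g hg ha hxy (Stmt9Aux.tyin_lt_self y)
      have hFinj : Function.Injective F := by
        intro x y hxy
        rcases lt_trichotomy (Stmt9Aux.tyin x) (Stmt9Aux.tyin y) with h' | h' | h'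
        · exact absurd (hxy ▸ hFmono x y h') (irrefl_of Stmt9Aux.rK _)
        · exact Stmt9Aux.tyin_inj h'
        · exact absurd (hxy ▸ hFmono y x h') (irrefl_of Stmt9Aux.rK _)
      have hX : #(Set.range F) = frakP := by
        rw [Cardinal.mk_range_eq F hFinj, Cardinal.mk_toType, Cardinal.card_ord]
      obtain ⟨A, hAC, hAX⟩ := hC3 (Set.range F) hX
      have hAinf : A.Infinite := by
        rw [← Set.infinite_coe_iff]
        exact Cardinal.infinite_iff.mpr (le_of_eq (hC2 A hAC).symm)
      refine ⟨Stmt9Aux.partOf g A, ⟨A, hAC, rfl⟩, ?_⟩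
      refine Stmt9Aux.partOf_splits g hg ha hAinf ?_
      intro α hα
      obtain ⟨x, hx⟩ := hAX hα
      exact ⟨Stmt9Aux.tyin x, Stmt9Aux.tyin_lt_self x, hx.symm⟩
  have hle1 : sPR ≤ frakS := by
    refine le_trans (csInf_le' hFPmem) ?_
    rw [← hC1]
    exact Cardinal.mk_image_le
  have hPRmem : sPR ∈ { κc : Cardinal | ∃ F : Set (ℕ → Set ℕ), #F = κc ∧
      (∀ P ∈ F, PartitionOfNat P) ∧ ∀ a : Set ℕ, a.Infinite → ∃ P ∈ F, PartSplits P a } :=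
    csInf_mem ⟨#FP, hFPmem⟩
  obtain ⟨Fp, hFpcard, hFppart, hFpsplit⟩ := hPRmem
  have hle2 : frakS ≤ sPR := by
    have hmem : #((fun P : ℕ → Set ℕ => P 0) '' Fp) ∈ { κc : Cardinal |
        ∃ S : Set (Set ℕ), #S = κc ∧
        ∀ a : Set ℕ, a.Infinite → ∃ x ∈ S, (a ∩ x).Infinite ∧ (a \ x).Infinite } := by
      refine ⟨_, rfl, ?_⟩
      intro a ha
      obtain ⟨P, hPF, hPs⟩ := hFpsplit a ha
      refine ⟨P 0, ⟨P, hPF, rfl⟩, ?_, ?_⟩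
      · rw [Set.inter_comm]; exact hPs 0
      · refine (hPs 1).mono ?_
        rintro x ⟨hx1, hxa⟩
        refine ⟨hxa, fun hx0 => ?_⟩
        have hd := (hFppart P hPF).1 0 1 (by omega)
        exact (Set.disjoint_left.mp hd hx0) hx1
    refine le_trans (csInf_le' hmem) ?_
    rw [← hFpcard]
    exact Cardinal.mk_image_le
  exact le_antisymm hle2 hle1
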